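/- For λ ∈ [0,1] and θ ∈ [0, π/2], the Gisin state ρ_G(λ,θ) is separable if and only if λ(1 + sin 2θ) ≤ 1. -/

import Mathlib

set_option maxHeartbeats 2000000


open Matrix Real
open scoped Kronecker ComplexOrder

def pairToFin4 (p : Fin 2 × Fin 2) : Fin 4 := ⟨2 * p.1.val + p.2.val, by omega⟩

/-- The Gisin state `ρ_G(λ,θ)`, indexed by `Fin 2 × Fin 2` in the basis order
`(0,0), (0,1), (1,0), (1,1)`. -/
noncomputable def gisinState (l t : ℝ) : Matrix (Fin 2 × Fin 2) (Fin 2 × Fin 2) ℂ :=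
  fun p q =>
    !![(((1 - l) / 2 : ℝ) : ℂ), 0, 0, 0;
       0, ((l * Real.sin t ^ 2 : ℝ) : ℂ), ((l * Real.sin t * Real.cos t : ℝ) : ℂ), 0;
       0, ((l * Real.sin t * Real.cos t : ℝ) : ℂ), ((l * Real.cos t ^ 2 : ℝ) : ℂ), 0;
       0, 0, 0, (((1 - l) / 2 : ℝ) : ℂ)] (pairToFin4 p) (pairToFin4 q)

def IsDensityMatrix {n : Type*} [Fintype n] [DecidableEq n] (ρ : Matrix n n ℂ) : Prop :=
  ρ.PosSemidef ∧ ρ.trace = 1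

/-- A bipartite density matrix is separable if it is a finite convex combination of
Kronecker products of density matrices. -/
def IsSeparableState {m n : ℕ} (ρ : Matrix (Fin m × Fin n) (Fin m × Fin n) ℂ) : Prop :=
  ∃ (k : ℕ) (p : Fin k → ℝ) (σ : Fin k → Matrix (Fin m) (Fin m) ℂ)
    (τ : Fin k → Matrix (Fin n) (Fin n) ℂ),
    (∀ i, 0 ≤ p i) ∧ (∑ i, p i = 1) ∧
    (∀ i, IsDensityMatrix (σ i)) ∧ (∀ i, IsDensityMatrix (τ i)) ∧
    ρ = ∑ i, (p i : ℂ) • (σ i ⊗ₖ τ i)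

lemma kron_psd {m n : ℕ} {σ : Matrix (Fin m) (Fin m) ℂ} {τ : Matrix (Fin n) (Fin n) ℂ}
    (hσ : σ.PosSemidef) (hτ : τ.PosSemidef) : (σ ⊗ₖ τ).PosSemidef := by
  exact Matrix.PosSemidef.kronecker hσ hτ

lemma gisin_forward (l t : ℝ) (hsep : IsSeparableState (gisinState l t)) :
    l * (1 + Real.sin (2 * t)) ≤ 1 := by
  obtain ⟨k, p, σ, τ, hp, hps, hσ, hτ, hρ⟩ := hsep
  set x : Fin 2 × Fin 2 → ℂ := fun q => if q = (0,0) then 1 else if q = (1,1) then -1 else 0 with hx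
  -- per-term nonnegativity
  have key : ∀ i, 0 ≤ (σ i 0 0 * τ i 0 0 + σ i 1 1 * τ i 1 1
      - σ i 0 1 * τ i 1 0 - σ i 1 0 * τ i 0 1).re := by
    intro i
    have hpsd : (σ i ⊗ₖ (τ i)ᵀ).PosSemidef := kron_psd (hσ i).1 ((hτ i).1.transpose)
    have h0 := hpsd.dotProduct_mulVec_nonneg x
    have heq : star x ⬝ᵥ (σ i ⊗ₖ (τ i)ᵀ) *ᵥ x
        = σ i 0 0 * τ i 0 0 + σ i 1 1 * τ i 1 1
          - σ i 0 1 * τ i 1 0 - σ i 1 0 * τ i 0 1 := by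
      simp [dotProduct, Matrix.mulVec, Fintype.sum_prod_type, Fin.sum_univ_two, hx,
        Matrix.kroneckerMap_apply, Matrix.transpose_apply, Prod.ext_iff]
      ring
    rw [heq] at h0
    exact (Complex.nonneg_iff.mp h0).1
  -- the witness value on gisinState
  have e00 := congrFun (congrFun hρ ((0:Fin 2),(0:Fin 2))) ((0:Fin 2),(0:Fin 2))
  have e11 := congrFun (congrFun hρ ((1:Fin 2),(1:Fin 2))) ((1:Fin 2),(1:Fin 2))
  have e01 := congrFun (congrFun hρ ((0:Fin 2),(1:Fin 2))) ((1:Fin 2),(0:Fin 2))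
  have e10 := congrFun (congrFun hρ ((1:Fin 2),(0:Fin 2))) ((0:Fin 2),(1:Fin 2))
  simp only [gisinState, pairToFin4, Matrix.sum_apply, Matrix.smul_apply,
    Matrix.kroneckerMap_apply, smul_eq_mul] at e00 e11 e01 e10
  norm_num at e00 e11 e01 e10
  have hsplit : ∑ i, (p i : ℂ) * (σ i 0 0 * τ i 0 0 + σ i 1 1 * τ i 1 1
          - σ i 0 1 * τ i 1 0 - σ i 1 0 * τ i 0 1)
      = (∑ i, (p i : ℂ) * (σ i 0 0 * τ i 0 0)) + (∑ i, (p i : ℂ) * (σ i 1 1 * τ i 1 1))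
        - (∑ i, (p i : ℂ) * (σ i 0 1 * τ i 1 0)) - (∑ i, (p i : ℂ) * (σ i 1 0 * τ i 0 1)) := by
    simp only [mul_add, mul_sub, Finset.sum_add_distrib, Finset.sum_sub_distrib]
  have hcomb : ((1 - l - 2 * (l * Real.sin t * Real.cos t) : ℝ) : ℂ)
      = ∑ i, (p i : ℂ) * (σ i 0 0 * τ i 0 0 + σ i 1 1 * τ i 1 1
          - σ i 0 1 * τ i 1 0 - σ i 1 0 * τ i 0 1) := by
    rw [hsplit, ← e00, ← e11, ← e01, ← e10]
    push_cast
    ring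
  have hre := congrArg Complex.re hcomb
  rw [Complex.ofReal_re, Complex.re_sum] at hre
  have hsum : 0 ≤ 1 - l - 2 * (l * Real.sin t * Real.cos t) := by
    rw [hre]
    apply Finset.sum_nonneg
    intro i _
    rw [Complex.re_ofReal_mul]
    exact mul_nonneg (hp i) (key i)
  rw [Real.sin_two_mul]
  nlinarith [hsum]

lemma row_density (x y : ℂ) (h : star x * x + star y * y = 1) :
    IsDensityMatrix ((!![x, y] : Matrix (Fin 1) (Fin 2) ℂ)ᴴ * !![x, y]) := by
  refine ⟨Matrix.posSemidef_conjTranspose_mul_self _, ?_⟩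
  simp [Matrix.trace_fin_two, Matrix.mul_apply, Fin.sum_univ_one, Matrix.conjTranspose_apply]
  simpa using h

lemma gisin_backward (l t : ℝ) (hl : l ∈ Set.Icc (0 : ℝ) 1)
    (ht : t ∈ Set.Icc (0 : ℝ) (Real.pi / 2))
    (h : l * (1 + Real.sin (2 * t)) ≤ 1) : IsSeparableState (gisinState l t) := by
  obtain ⟨hl0, hl1⟩ := hl
  obtain ⟨ht0, ht1⟩ := ht
  set s := Real.sin t with hs_def
  set c := Real.cos t with hc_def
  have hs : 0 ≤ s := Real.sin_nonneg_of_nonneg_of_le_pi ht0 (by linarith [Real.pi_pos])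
  have hc : 0 ≤ c := Real.cos_nonneg_of_mem_Icc ⟨by linarith [Real.pi_pos], ht1⟩
  have hsc : s ^ 2 + c ^ 2 = 1 := Real.sin_sq_add_cos_sq t
  set d : ℝ := s + c with hd_def
  have hd1 : 1 ≤ d := by nlinarith
  have hd0 : d ≠ 0 := by linarith
  have h2 : l * (1 + 2 * (s * c)) ≤ 1 := by
    rw [Real.sin_two_mul] at h; linarith [h]
  set A : ℝ := Real.sqrt (s / d) with hA_def
  set B : ℝ := Real.sqrt (c / d) with hB_def
  have hA2 : A ^ 2 = s / d := Real.sq_sqrt (div_nonneg hs (by linarith))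
  have hB2 : B ^ 2 = c / d := Real.sq_sqrt (div_nonneg hc (by linarith))
  set w : ℝ := l * d ^ 2 with hw_def
  set μ : ℝ := (1 - l) / 2 - l * (s * c) with hμ_def
  have hw0 : 0 ≤ w := mul_nonneg hl0 (sq_nonneg d)
  have hμ0 : 0 ≤ μ := by simp only [hμ_def]; linarith
  set u : Fin 6 → Matrix (Fin 1) (Fin 2) ℂ :=
    ![!![(A:ℂ), (B:ℂ)], !![(A:ℂ), Complex.I * B], !![(A:ℂ), -(B:ℂ)],
      !![(A:ℂ), -(Complex.I * B)], !![1, 0], !![0, 1]] with hu_def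
  set v : Fin 6 → Matrix (Fin 1) (Fin 2) ℂ :=
    ![!![(B:ℂ), (A:ℂ)], !![(B:ℂ), Complex.I * A], !![(B:ℂ), -(A:ℂ)],
      !![(B:ℂ), -(Complex.I * A)], !![1, 0], !![0, 1]] with hv_def
  have hAB : A ^ 2 + B ^ 2 = 1 := by rw [hA2, hB2]; field_simp; linarith [hd_def]
  have hABc : ((A:ℂ)) ^ 2 + ((B:ℂ)) ^ 2 = 1 := by exact_mod_cast congrArg (fun r : ℝ => (r : ℂ)) hAB
  have key1 : star ((A:ℂ)) * A + star ((B:ℂ)) * B = 1 := by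
    simp [Complex.conj_ofReal]; linear_combination hABc
  have key2 : star ((A:ℂ)) * A + star (Complex.I * B) * (Complex.I * B) = 1 := by
    simp [Complex.conj_ofReal, _root_.map_mul, Complex.conj_I]
    linear_combination hABc - ((B:ℂ)) ^ 2 * Complex.I_sq
  have key3 : star ((A:ℂ)) * A + star (-(B:ℂ)) * (-(B:ℂ)) = 1 := by
    simp [Complex.conj_ofReal]; linear_combination hABc
  have key4 : star ((A:ℂ)) * A + star (-(Complex.I * B)) * (-(Complex.I * B)) = 1 := by
    simp [Complex.conj_ofReal, _root_.map_mul, Complex.conj_I]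
    linear_combination hABc - ((B:ℂ)) ^ 2 * Complex.I_sq
  have key1' : star ((B:ℂ)) * B + star ((A:ℂ)) * A = 1 := by rw [add_comm]; exact key1
  have key2' : star ((B:ℂ)) * B + star (Complex.I * A) * (Complex.I * A) = 1 := by
    simp [Complex.conj_ofReal, _root_.map_mul, Complex.conj_I]
    linear_combination hABc - ((A:ℂ)) ^ 2 * Complex.I_sq
  have key3' : star ((B:ℂ)) * B + star (-(A:ℂ)) * (-(A:ℂ)) = 1 := by
    simp [Complex.conj_ofReal]; linear_combination hABc
  have key4' : star ((B:ℂ)) * B + star (-(Complex.I * A)) * (-(Complex.I * A)) = 1 := by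
    simp [Complex.conj_ofReal, _root_.map_mul, Complex.conj_I]
    linear_combination hABc - ((A:ℂ)) ^ 2 * Complex.I_sq
  have key0 : star (1:ℂ) * 1 + star (0:ℂ) * 0 = 1 := by norm_num
  have key0' : star (0:ℂ) * 0 + star (1:ℂ) * 1 = 1 := by norm_num
  refine ⟨6, fun i => if i.val < 4 then w/4 else μ, fun i => (u i)ᴴ * (u i), fun i => (v i)ᴴ * (v i),
    ?_, ?_, ?_, ?_, ?_⟩
  · intro i; fin_cases i <;> norm_num [show ((0:Fin 6)).val = 0 from rfl, show ((1:Fin 6)).val = 1 from rfl, show ((2:Fin 6)).val = 2 from rfl, show ((3:Fin 6)).val = 3 from rfl, show ((4:Fin 6)).val = 4 from rfl, show ((5:Fin 6)).val = 5 from rfl] <;> linarith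
  · rw [Fin.sum_univ_six]
    norm_num [show ((0:Fin 6)).val = 0 from rfl, show ((1:Fin 6)).val = 1 from rfl, show ((2:Fin 6)).val = 2 from rfl, show ((3:Fin 6)).val = 3 from rfl, show ((4:Fin 6)).val = 4 from rfl, show ((5:Fin 6)).val = 5 from rfl]
    have hw1 : w = l + 2 * (l * (s * c)) := by
      rw [hw_def, hd_def]; linear_combination l * hsc
    linarith
  · intro i
    fin_cases i
    exacts [row_density _ _ key1, row_density _ _ key2, row_density _ _ key3,
      row_density _ _ key4, row_density _ _ key0, row_density _ _ key0']
  · intro i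
    fin_cases i
    exacts [row_density _ _ key1', row_density _ _ key2', row_density _ _ key3',
      row_density _ _ key4', row_density _ _ key0, row_density _ _ key0']
  · have hA2c : ((A:ℂ)) ^ 2 * d = s := by
      have : A ^ 2 * d = s := by rw [hA2]; field_simp
      exact_mod_cast congrArg (fun r : ℝ => (r : ℂ)) this
    have hB2c : ((B:ℂ)) ^ 2 * d = c := by
      have : B ^ 2 * d = c := by rw [hB2]; field_simp
      exact_mod_cast congrArg (fun r : ℝ => (r : ℂ)) this
    have hdc : ((d:ℂ)) = s + c := by exact_mod_cast congrArg (fun r : ℝ => (r : ℂ)) hd_def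
    have hwc : ((w:ℂ)) = l * d ^ 2 := by exact_mod_cast congrArg (fun r : ℝ => (r : ℂ)) hw_def
    have hμc : ((μ:ℂ)) = (1 - l) / 2 - l * (s * c) := by
      exact_mod_cast congrArg (fun r : ℝ => (r : ℂ)) hμ_def
    have hd0c : ((d:ℂ)) ≠ 0 := by exact_mod_cast hd0
    have hsC : Complex.sin (t:ℂ) = ((s:ℝ):ℂ) := by
      rw [hs_def]; exact (Complex.ofReal_sin t).symm
    have hcC : Complex.cos (t:ℂ) = ((c:ℝ):ℂ) := by
      rw [hc_def]; exact (Complex.ofReal_cos t).symm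
    have hA2c' : ((A:ℂ)) ^ 2 * (((s:ℝ):ℂ) + ((c:ℝ):ℂ)) = ((s:ℝ):ℂ) := by
      have : A ^ 2 * (s + c) = s := by rw [hA2, ← hd_def]; field_simp
      exact_mod_cast congrArg (fun r : ℝ => (r : ℂ)) this
    have hB2c' : ((B:ℂ)) ^ 2 * (((s:ℝ):ℂ) + ((c:ℝ):ℂ)) = ((c:ℝ):ℂ) := by
      have : B ^ 2 * (s + c) = c := by rw [hB2, ← hd_def]; field_simp
      exact_mod_cast congrArg (fun r : ℝ => (r : ℂ)) this
    ext ⟨a, b⟩ ⟨e, f⟩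
    fin_cases a <;> fin_cases b <;> fin_cases e <;> fin_cases f <;>
    · simp only [gisinState, pairToFin4, Matrix.sum_apply, Matrix.smul_apply,
        Matrix.kroneckerMap_apply, Fin.sum_univ_six, Matrix.mul_apply, Fin.sum_univ_one,
        Matrix.conjTranspose_apply, smul_eq_mul,
        show u 0 = !![(A:ℂ), (B:ℂ)] from rfl, show u 1 = !![(A:ℂ), Complex.I * B] from rfl,
        show u 2 = !![(A:ℂ), -(B:ℂ)] from rfl, show u 3 = !![(A:ℂ), -(Complex.I * B)] from rfl,
        show u 4 = !![(1:ℂ), 0] from rfl, show u 5 = !![(0:ℂ), 1] from rfl,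
        show v 0 = !![(B:ℂ), (A:ℂ)] from rfl, show v 1 = !![(B:ℂ), Complex.I * A] from rfl,
        show v 2 = !![(B:ℂ), -(A:ℂ)] from rfl, show v 3 = !![(B:ℂ), -(Complex.I * A)] from rfl,
        show v 4 = !![(1:ℂ), 0] from rfl, show v 5 = !![(0:ℂ), 1] from rfl]
      norm_num [Complex.conj_ofReal, _root_.map_mul, Complex.conj_I, Fin.isValue,
        Matrix.cons_val_zero, Matrix.cons_val_one, Matrix.head_cons, hsC, hcC,
        show ((0:Fin 6)).val = 0 from rfl, show ((1:Fin 6)).val = 1 from rfl,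
        show ((2:Fin 6)).val = 2 from rfl, show ((3:Fin 6)).val = 3 from rfl,
        show ((4:Fin 6)).val = 4 from rfl, show ((5:Fin 6)).val = 5 from rfl]
      try ring_nf
      try simp only [Complex.I_sq, Complex.I_pow_four]
      try ring_nf
      try push_cast
      try (first
           | ring1
           | linear_combination (-(l:ℂ) * (((A:ℂ))^2*(((s:ℝ):ℂ)+((c:ℝ):ℂ)) + ((s:ℝ):ℂ))) * hA2c'
           | linear_combination (-(l:ℂ) * ((((s:ℝ):ℂ)+((c:ℝ):ℂ))*((B:ℂ))^2)) * hA2c' + (-(l:ℂ) * ((s:ℝ):ℂ)) * hB2c'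
           | linear_combination (-(l:ℂ) * (((B:ℂ))^2*(((s:ℝ):ℂ)+((c:ℝ):ℂ)) + ((c:ℝ):ℂ))) * hB2c'
           | linear_combination (-(A:ℂ)^4) * hwc - (l:ℂ) * ((A:ℂ)^2 * d + s) * hA2c
           | linear_combination (-(B:ℂ)^4) * hwc - (l:ℂ) * ((B:ℂ)^2 * d + c) * hB2c
           | linear_combination (-(A:ℂ)^2*(B:ℂ)^2) * hwc - (l:ℂ) * (B:ℂ)^2 * d * hA2c - (l:ℂ) * s * hB2c
           | linear_combination (-(A:ℂ)^2*(B:ℂ)^2) * hwc - (l:ℂ) * (B:ℂ)^2 * d * hA2c - (l:ℂ) * s * hB2c - hμc)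

theorem gisin_separable_iff (l t : ℝ) (hl : l ∈ Set.Icc (0 : ℝ) 1)
    (ht : t ∈ Set.Icc (0 : ℝ) (Real.pi / 2)) :
    IsSeparableState (gisinState l t) ↔ l * (1 + Real.sin (2 * t)) ≤ 1 := by
  exact ⟨gisin_forward l t, gisin_backward l t hl ht⟩
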